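/- With notation as in the Gaussian mixture identity, let η_max = max_k σ_k²/N_{t,k} and η_min = min_k σ_k²/N_{t,k}. Then ½ Σ_{k=1}^K S_{t,k}²/N_{t,k} ≤ (1 + η_max)·( ln E_{λ∼ρ}[exp(Σ_k (λ_k S_{t,k} - N_{t,k} λ_k²/2))] + (K/2) ln(1 + η_min^{-1}) ). -/

import Mathlib

open MeasureTheory ProbabilityTheory Real

lemma my_integral_pi_eq_prod {K : ℕ} (μ : Fin K → Measure ℝ) [h : ∀ k, SigmaFinite (μ k)] (f : Fin K → ℝ → ℝ) :
    ∫ x : Fin K → ℝ, ∏ k, f k (x k) ∂(Measure.pi μ) = ∏ k, ∫ x, f k x ∂(μ k) := by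
  exact MeasureTheory.integral_fintype_prod_eq_prod (μ := μ) f

lemma my_gauss_lin (b c : ℝ) (hb : 0 < b) :
    ∫ x : ℝ, Real.exp (-b * x^2 + c * x) = Real.sqrt (π / b) * Real.exp (c^2 / (4*b)) := by
  have h : ∀ x : ℝ, -b * x^2 + c*x = -b * (x - c/(2*b))^2 + c^2/(4*b) := by
    intro x; field_simp; ring
  simp_rw [h, Real.exp_add]
  rw [MeasureTheory.integral_mul_const,
    integral_sub_right_eq_self (fun x => Real.exp (-b*x^2)) (c/(2*b)),
    integral_gaussian]

lemma my_gauss_mgf (Sv Nv s : ℝ) (hN : 0 < Nv) (hs : 0 < s) :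
    ∫ x : ℝ, Real.exp (x * Sv - Nv * x^2 / 2) ∂ gaussianReal 0 (Real.toNNReal (s⁻¹^2))
      = Real.exp (Sv^2 / (2*(Nv + s^2))) / Real.sqrt (1 + Nv / s^2) := by
  set v : NNReal := Real.toNNReal (s⁻¹^2) with hv_def
  have hvR : (v : ℝ) = s⁻¹^2 := Real.coe_toNNReal _ (by positivity)
  have hvpos : 0 < (v : ℝ) := by rw [hvR]; positivity
  have hvne : v ≠ 0 := by
    intro h; rw [h] at hvpos; simp at hvpos
  rw [gaussianReal_of_var_ne_zero _ hvne]
  have hpdf : gaussianPDF 0 v = fun x => ((Real.toNNReal (gaussianPDFReal 0 v x) : NNReal) : ENNReal) := by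
    funext x; rfl
  rw [hpdf, integral_withDensity_eq_integral_smul
    ((measurable_gaussianPDFReal 0 v).real_toNNReal) _]
  have hb : (0:ℝ) < (Nv + s^2)/2 := by positivity
  have hint : ∀ x : ℝ, (Real.toNNReal (gaussianPDFReal 0 v x)) • Real.exp (x * Sv - Nv * x^2 / 2)
      = (Real.sqrt (2*π*(v:ℝ)))⁻¹ * Real.exp (-((Nv + s^2)/2)*x^2 + Sv*x) := by
    intro x
    rw [NNReal.smul_def, Real.coe_toNNReal _ (gaussianPDFReal_nonneg 0 v x), smul_eq_mul,
      gaussianPDFReal, mul_assoc, ← Real.exp_add]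
    congr 2
    rw [hvR]
    field_simp
    ring
  simp_rw [hint]
  rw [MeasureTheory.integral_const_mul, my_gauss_lin _ _ hb]
  have h1 : (Real.sqrt (2*π*(v:ℝ)))⁻¹ * Real.sqrt (π / ((Nv + s^2)/2)) = (Real.sqrt (1 + Nv / s^2))⁻¹ := by
    rw [← Real.sqrt_inv, ← Real.sqrt_inv, ← Real.sqrt_mul (by positivity)]
    congr 1
    rw [hvR]
    have hπ : (0:ℝ) < π := Real.pi_pos
    field_simp
    ring
  rw [← mul_assoc, h1]
  have h2 : Sv^2/(4*((Nv+s^2)/2)) = Sv^2/(2*(Nv+s^2)) := by ring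
  rw [h2]
  exact inv_mul_eq_div _ _

theorem stmt_5 (K : ℕ) [NeZero K] (S N σ : Fin K → ℝ)
    (hN : ∀ k, 0 < N k) (hσ : ∀ k, 0 < σ k) :
    (1 / 2) * ∑ k, (S k) ^ 2 / N k ≤
      (1 + ⨆ k, (σ k) ^ 2 / N k) *
        (Real.log (∫ l : Fin K → ℝ,
            Real.exp (∑ k, (l k * S k - N k * (l k) ^ 2 / 2))
            ∂(Measure.pi fun k => gaussianReal 0 (Real.toNNReal ((σ k)⁻¹ ^ 2)))) +
          ((K : ℝ) / 2) * Real.log (1 + (⨅ k, (σ k) ^ 2 / N k)⁻¹)) := by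
  have hfpos : ∀ k, 0 < (σ k)^2 / N k := fun k => by have := hN k; have := hσ k; positivity
  have hI : (∫ l : Fin K → ℝ, Real.exp (∑ k, (l k * S k - N k * (l k)^2/2))
        ∂(Measure.pi fun k => gaussianReal 0 (Real.toNNReal ((σ k)⁻¹^2))))
      = ∏ k, (Real.exp ((S k)^2 / (2*(N k + (σ k)^2))) / Real.sqrt (1 + N k / (σ k)^2)) := by
    calc (∫ l : Fin K → ℝ, Real.exp (∑ k, (l k * S k - N k * (l k)^2/2))
        ∂(Measure.pi fun k => gaussianReal 0 (Real.toNNReal ((σ k)⁻¹^2))))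
        = ∫ l : Fin K → ℝ, ∏ k, Real.exp (l k * S k - N k * (l k)^2/2)
          ∂(Measure.pi fun k => gaussianReal 0 (Real.toNNReal ((σ k)⁻¹^2))) := by
          simp_rw [Real.exp_sum]
      _ = ∏ k, ∫ x : ℝ, Real.exp (x * S k - N k * x^2/2)
          ∂(gaussianReal 0 (Real.toNNReal ((σ k)⁻¹^2))) :=
          my_integral_pi_eq_prod (fun k => gaussianReal 0 (Real.toNNReal ((σ k)⁻¹^2)))
            (fun k x => Real.exp (x * S k - N k * x^2/2))
      _ = _ := Finset.prod_congr rfl fun k _ => my_gauss_mgf _ _ _ (hN k) (hσ k)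
  rw [hI]
  have hsqrtpos : ∀ k : Fin K, (0:ℝ) < Real.sqrt (1 + N k / (σ k)^2) := fun k =>
    Real.sqrt_pos.mpr (by have := hN k; have := hσ k; positivity)
  have hlog : Real.log (∏ k, (Real.exp ((S k)^2 / (2*(N k + (σ k)^2))) / Real.sqrt (1 + N k / (σ k)^2)))
      = ∑ k, ((S k)^2/(2*(N k + (σ k)^2)) - (1/2)*Real.log (1 + N k/(σ k)^2)) := by
    rw [Real.log_prod (fun k _ => div_ne_zero (Real.exp_ne_zero _) (ne_of_gt (hsqrtpos k)))]
    refine Finset.sum_congr rfl fun k _ => ?_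
    rw [Real.log_div (Real.exp_ne_zero _) (ne_of_gt (hsqrtpos k)), Real.log_exp,
      Real.log_sqrt (by have := hN k; have := hσ k; positivity)]
    ring
  rw [hlog]
  set f : Fin K → ℝ := fun k => (σ k)^2 / N k with hf
  have hbddA : BddAbove (Set.range f) := (Set.finite_range f).bddAbove
  have hbddB : BddBelow (Set.range f) := (Set.finite_range f).bddBelow
  have hMk : ∀ k, f k ≤ ⨆ j, f j := fun k => le_ciSup hbddA k
  have hmk : ∀ k, (⨅ j, f j) ≤ f k := fun k => ciInf_le hbddB k
  have hmpos : 0 < ⨅ j, f j := by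
    obtain ⟨k0, hk0⟩ := Finite.exists_min f
    exact lt_of_lt_of_le (hfpos k0) (le_ciInf hk0)
  have hMpos : 0 < ⨆ j, f j := lt_of_lt_of_le (hfpos ⟨0, Nat.pos_of_ne_zero (NeZero.ne K)⟩)
    (hMk _)
  set M := ⨆ j, f j
  set m := ⨅ j, f j
  have htpos : ∀ k : Fin K, (0:ℝ) ≤ (S k)^2/(2*(N k + (σ k)^2)) := fun k => by
    have := hN k; have := hσ k; positivity
  -- B ≤ (K/2) log(1+m⁻¹)
  have hB : ∑ k : Fin K, (1/2)*Real.log (1 + N k/(σ k)^2)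
      ≤ ((K:ℝ)/2) * Real.log (1 + m⁻¹) := by
    have : ((K:ℝ)/2) * Real.log (1 + m⁻¹) = ∑ _k : Fin K, (1/2)*Real.log (1 + m⁻¹) := by
      rw [Finset.sum_const, Finset.card_univ, Fintype.card_fin, nsmul_eq_mul]; ring
    rw [this]
    refine Finset.sum_le_sum fun k _ => ?_
    have h1 : N k/(σ k)^2 ≤ m⁻¹ := by
      have : (f k)⁻¹ ≤ m⁻¹ := inv_anti₀ hmpos (hmk k)
      rwa [hf, inv_div] at this
    have h2 : (0:ℝ) < 1 + N k/(σ k)^2 := by have := hN k; have := hσ k; positivity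
    have := Real.log_le_log h2 (by linarith : 1 + N k/(σ k)^2 ≤ 1 + m⁻¹)
    linarith
  have hA : (0:ℝ) ≤ ∑ k : Fin K, (S k)^2/(2*(N k + (σ k)^2)) :=
    Finset.sum_nonneg fun k _ => htpos k
  have hinner : ∑ k : Fin K, (S k)^2/(2*(N k + (σ k)^2))
      ≤ ∑ k, ((S k)^2/(2*(N k + (σ k)^2)) - (1/2)*Real.log (1 + N k/(σ k)^2))
        + ((K:ℝ)/2) * Real.log (1 + m⁻¹) := by
    rw [Finset.sum_sub_distrib]
    linarith
  calc (1 / 2) * ∑ k, (S k) ^ 2 / N k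
      = ∑ k, (1 + f k) * ((S k)^2/(2*(N k + (σ k)^2))) := by
        rw [Finset.mul_sum]
        refine Finset.sum_congr rfl fun k _ => ?_
        have h1 : N k ≠ 0 := (hN k).ne'
        have h2 : N k + σ k ^ 2 ≠ 0 := by have := hN k; have := hσ k; positivity
        show 1/2 * (S k ^ 2 / N k) = (1 + σ k ^ 2 / N k) * (S k ^ 2 / (2 * (N k + σ k ^ 2)))
        field_simp
    _ ≤ ∑ k, (1 + M) * ((S k)^2/(2*(N k + (σ k)^2))) :=
        Finset.sum_le_sum fun k _ => mul_le_mul_of_nonneg_right (by linarith [hMk k]) (htpos k)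
    _ = (1 + M) * ∑ k, (S k)^2/(2*(N k + (σ k)^2)) := (Finset.mul_sum _ _ _).symm
    _ ≤ (1 + M) * (∑ k, ((S k)^2/(2*(N k + (σ k)^2)) - (1/2)*Real.log (1 + N k/(σ k)^2))
        + ((K:ℝ)/2) * Real.log (1 + m⁻¹)) :=
        mul_le_mul_of_nonneg_left hinner (by linarith)
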